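/- The set S of probability-type densities, namely measures on [0,∞) with density e^{-Ψ} where Ψ is convex, non-decreasing, Ψ(0) = 0, and ∫₀^∞ e^{-Ψ(r)} r^{n-1} dr = 1, is uniformly tight: for every ε > 0 there is b > 0 such that ∫_b^∞ e^{-Ψ(r)} dr < ε for all such Ψ. -/

import Mathlib

open Set MeasureTheory

lemma aux_integral_exp_neg_mul_Ioi {a c : ℝ} (ha : 0 < a) :
    (∫ x in Set.Ioi c, Real.exp (-(a * x))) = Real.exp (-(a * c)) / a := by
  have h := MeasureTheory.integral_Ioi_of_hasDerivAt_of_tendsto'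
    (f := fun x => -Real.exp (-(a * x)) / a) (f' := fun x => Real.exp (-(a * x)))
    (a := c) (m := 0) ?_ ?_ ?_
  · rw [h]; ring
  · intro x _
    have : HasDerivAt (fun x => -(a * x)) (-a) x := by
      simpa using ((hasDerivAt_id x).const_mul a).fun_neg
    have := (this.exp).fun_neg.div_const a
    refine this.congr_deriv ?_
    rw [mul_neg, neg_neg, mul_div_assoc, div_self ha.ne', mul_one]
  · have : IntegrableOn (fun x => Real.exp (-a * x)) (Set.Ioi c) :=
      exp_neg_integrableOn_Ioi c ha
    simpa [neg_mul] using this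
  · have h1 : Filter.Tendsto (fun x : ℝ => a * x) Filter.atTop Filter.atTop :=
      Filter.Tendsto.const_mul_atTop ha Filter.tendsto_id
    have h2 : Filter.Tendsto (fun x : ℝ => Real.exp (-(a * x))) Filter.atTop (nhds 0) := by
      have := Real.tendsto_exp_neg_atTop_nhds_zero.comp h1
      simpa [Function.comp_def] using this
    simpa using (h2.neg.div_const a)

theorem tightness_of_logconcave_class (n : ℕ) (hn : 1 ≤ n) :
    ∀ ε : ℝ, 0 < ε → ∃ b : ℝ, 0 < b ∧
      ∀ Ψ : ℝ → ℝ, ConvexOn ℝ (Set.Ici 0) Ψ → MonotoneOn Ψ (Set.Ici 0) →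
        (∀ r ∈ Set.Ici (0 : ℝ), 0 ≤ Ψ r) → Ψ 0 = 0 →
        (∫ r in Set.Ioi (0 : ℝ), Real.exp (-Ψ r) * r ^ (n - 1)) = 1 →
        (∫ r in Set.Ioi b, Real.exp (-Ψ r)) < ε := by
  intro ε hε
  -- the uniform linear rate
  set a : ℝ := Real.log (2 ^ n / n) / 2 with ha_def
  have h2n : (n : ℝ) < 2 ^ n := by exact_mod_cast Nat.lt_two_pow_self
  have hn0 : (0 : ℝ) < n := by exact_mod_cast hn
  have hratio : (1 : ℝ) < 2 ^ n / n := (one_lt_div hn0).mpr h2n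
  have ha : 0 < a := by
    have := Real.log_pos hratio
    positivity
  -- choose b large enough
  set b : ℝ := max 2 ((|Real.log (a * ε)| + 1) / a) with hb_def
  have hb2 : (2 : ℝ) ≤ b := le_max_left _ _
  have hb0 : 0 < b := lt_of_lt_of_le (by norm_num) hb2
  refine ⟨b, hb0, ?_⟩
  intro Ψ hconv hmono hnonneg hΨ0 hint
  -- Step 1: Ψ 2 ≥ 2 a
  have hInt : IntegrableOn (fun r => Real.exp (-Ψ r) * r ^ (n - 1)) (Set.Ioi 0) :=
    integrable_of_integral_eq_one hint
  have hIoc : IntegrableOn (fun r => Real.exp (-Ψ r) * r ^ (n - 1)) (Set.Ioc 0 2) :=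
    hInt.mono_set Set.Ioc_subset_Ioi_self
  have key1 : (∫ r in Set.Ioc (0 : ℝ) 2, Real.exp (-Ψ r) * r ^ (n - 1)) ≤ 1 := by
    rw [← hint]
    apply setIntegral_mono_set hInt
    · filter_upwards [ae_restrict_mem measurableSet_Ioi] with r hr
      have := Real.exp_pos (-Ψ r)
      have : (0:ℝ) ≤ r ^ (n-1) := pow_nonneg (le_of_lt hr) _
      positivity
    · exact Filter.Eventually.of_forall fun r hr => hr.1
  have key2 : Real.exp (-Ψ 2) * (2 ^ n / n) ≤
      ∫ r in Set.Ioc (0 : ℝ) 2, Real.exp (-Ψ r) * r ^ (n - 1) := by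
    have hval : (∫ r in Set.Ioc (0 : ℝ) 2, Real.exp (-Ψ 2) * r ^ (n - 1))
        = Real.exp (-Ψ 2) * (2 ^ n / n) := by
      rw [integral_const_mul]
      congr 1
      rw [← intervalIntegral.integral_of_le (by norm_num : (0:ℝ) ≤ 2),
        integral_pow]
      have hne : n ≠ 0 := by omega
      have : n - 1 + 1 = n := Nat.succ_pred_eq_of_pos hn
      rw [this, zero_pow hne, sub_zero, Nat.cast_sub hn]
      norm_num
    rw [← hval]
    apply setIntegral_mono_on
    · exact (continuous_const.mul (continuous_pow _)).integrableOn_Ioc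
    · exact hIoc
    · exact measurableSet_Ioc
    · intro r hr
      have hΨle : Ψ r ≤ Ψ 2 := hmono (le_of_lt hr.1) (by norm_num) hr.2
      have : Real.exp (-Ψ 2) ≤ Real.exp (-Ψ r) := Real.exp_le_exp.mpr (by linarith)
      exact mul_le_mul_of_nonneg_right this (pow_nonneg (le_of_lt hr.1) _)
  have hΨ2 : 2 * a ≤ Ψ 2 := by
    have hle : Real.exp (-Ψ 2) ≤ (n : ℝ) / 2 ^ n := by
      have h2pos : (0:ℝ) < 2 ^ n / n := by positivity
      have h1 : Real.exp (-Ψ 2) * (2 ^ n / n) ≤ 1 := le_trans key2 key1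
      have h2 : Real.exp (-Ψ 2) ≤ 1 / (2 ^ n / n) := (le_div_iff₀ h2pos).mpr (by linarith)
      rwa [one_div_div] at h2
    have := Real.exp_le_exp.mpr (le_refl (-Ψ 2))
    have hlog : -Ψ 2 ≤ Real.log ((n : ℝ) / 2 ^ n) := by
      rw [← Real.exp_le_exp, Real.exp_log (by positivity)]
      exact hle
    have : Real.log ((n : ℝ) / 2 ^ n) = -Real.log (2 ^ n / n) := by
      rw [← Real.log_inv]
      congr 1
      field_simp
    rw [this] at hlog
    have : Real.log (2 ^ n / n) ≤ Ψ 2 := by linarith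
    rw [ha_def]; linarith
  -- Step 2: linear lower bound for r ≥ 2
  have hlin : ∀ r : ℝ, 2 ≤ r → a * r ≤ Ψ r := by
    intro r hr
    have hr0 : (0:ℝ) < r := by linarith
    have hα : (0:ℝ) ≤ 2 / r := by positivity
    have hα1 : 2 / r ≤ 1 := by rw [div_le_one hr0]; linarith
    have hβ : (0:ℝ) ≤ 1 - 2 / r := by linarith
    have hsum : 2 / r + (1 - 2 / r) = 1 := by ring
    have := hconv.2 (Set.mem_Ici.mpr (le_of_lt hr0)) (Set.mem_Ici.mpr le_rfl)
      hα hβ hsum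
    simp only [smul_eq_mul, mul_zero, add_zero, hΨ0, mul_zero, add_zero] at this
    have hx : 2 / r * r = 2 := by field_simp
    rw [hx] at this
    -- Ψ 2 ≤ (2/r) * Ψ r
    have h2 : 2 * a ≤ 2 / r * Ψ r := le_trans hΨ2 this
    have := mul_le_mul_of_nonneg_left h2 (le_of_lt (half_pos hr0))
    calc a * r = r / 2 * (2 * a) := by ring
      _ ≤ r / 2 * (2 / r * Ψ r) := mul_le_mul_of_nonneg_left h2 (by positivity)
      _ = Ψ r := by field_simp
  -- Step 3: bound the tail integral
  by_cases hI : IntegrableOn (fun r => Real.exp (-Ψ r)) (Set.Ioi b)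
  · have hbound : (∫ r in Set.Ioi b, Real.exp (-Ψ r)) ≤
        ∫ r in Set.Ioi b, Real.exp (-(a * r)) := by
      apply setIntegral_mono_on hI ?_ measurableSet_Ioi
      · intro r hr
        have : a * r ≤ Ψ r := hlin r (le_trans hb2 (le_of_lt hr))
        exact Real.exp_le_exp.mpr (by linarith)
      · have : IntegrableOn (fun x => Real.exp (-a * x)) (Set.Ioi b) :=
          exp_neg_integrableOn_Ioi b ha
        simpa [neg_mul] using this
    have hval : (∫ r in Set.Ioi b, Real.exp (-(a * r))) = Real.exp (-(a * b)) / a :=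
      aux_integral_exp_neg_mul_Ioi ha
    have hfinal : Real.exp (-(a * b)) / a < ε := by
      rw [div_lt_iff₀ ha, ← Real.exp_log (show (0:ℝ) < ε * a by positivity),
        Real.exp_lt_exp]
      have hab : |Real.log (a * ε)| + 1 ≤ a * b := by
        have := le_max_right 2 ((|Real.log (a * ε)| + 1) / a)
        calc |Real.log (a * ε)| + 1 = a * ((|Real.log (a * ε)| + 1) / a) := by
              field_simp
          _ ≤ a * b := mul_le_mul_of_nonneg_left this (le_of_lt ha)
      have : -Real.log (ε * a) ≤ |Real.log (a * ε)| := by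
        rw [mul_comm ε a]
        exact neg_le_abs _
      linarith
    calc (∫ r in Set.Ioi b, Real.exp (-Ψ r)) ≤ Real.exp (-(a * b)) / a := by
          rw [← hval]; exact hbound
      _ < ε := hfinal
  · rw [integral_undef (fun h => hI h)]
    exact hε
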